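/- Itzykson–Zuber type formula on Sp(2)/Sp(1)×Sp(1): for p ≠ 0, ∫ exp(-p S(Q)) dμ(Q) = (6/p²)(1 - 2/p + e^{-p}(1 + 2/p)), where S(Q) = |Q₁₂|² + |Q₁₄|² and dμ is the normalized invariant measure. Equivalently, with x = √S(Q) distributed with density 12 x³(1-x²) on [0,1], ∫₀¹ e^{-px²} · 12 x³(1-x²) dx = (6/p²)(1 - 2/p + e^{-p}(1 + 2/p)). -/

import Mathlib

open Real MeasureTheory intervalIntegral

/-- Itzykson–Zuber type formula on `Sp(2)/Sp(1)×Sp(1)`, reduced to one dimension: with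
`x = √S(Q)` distributed with density `12x³(1-x²)` on `[0,1]`, for `p ≠ 0`,
`∫₀¹ e^{-px²} · 12x³(1-x²) dx = (6/p²)(1 - 2/p + e^{-p}(1 + 2/p))`. -/
theorem itzykson_zuber_sp2 (p : ℝ) (hp : p ≠ 0) :
    ∫ x in (0 : ℝ)..1, Real.exp (-p * x ^ 2) * (12 * x ^ 3 * (1 - x ^ 2)) =
      6 / p ^ 2 * (1 - 2 / p + Real.exp (-p) * (1 + 2 / p)) := by
  set F : ℝ → ℝ := fun x =>
    -Real.exp (-p * x ^ 2) * ((6 * x ^ 2 - 6 * x ^ 4) / p + (6 - 12 * x ^ 2) / p ^ 2 - 12 / p ^ 3)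
    with hF
  have hderiv : ∀ x ∈ Set.uIcc (0 : ℝ) 1,
      HasDerivAt F (Real.exp (-p * x ^ 2) * (12 * x ^ 3 * (1 - x ^ 2))) x := by
    intro x _
    have hx2 : HasDerivAt (fun x : ℝ => x ^ 2) (2 * x) x := by
      simpa using hasDerivAt_pow 2 x
    have hx4 : HasDerivAt (fun x : ℝ => x ^ 4) (4 * x ^ 3) x := by
      simpa using hasDerivAt_pow 4 x
    have he : HasDerivAt (fun x : ℝ => -Real.exp (-p * x ^ 2))
        (-(Real.exp (-p * x ^ 2) * (-p * (2 * x)))) x :=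
      ((hx2.const_mul (-p)).exp).neg
    have hQ : HasDerivAt (fun x : ℝ =>
        (6 * x ^ 2 - 6 * x ^ 4) / p + (6 - 12 * x ^ 2) / p ^ 2 - 12 / p ^ 3)
        ((6 * (2 * x) - 6 * (4 * x ^ 3)) / p + (-(12 * (2 * x))) / p ^ 2) x := by
      have h1 : HasDerivAt (fun x : ℝ => (6 * x ^ 2 - 6 * x ^ 4) / p)
          ((6 * (2 * x) - 6 * (4 * x ^ 3)) / p) x :=
        ((hx2.const_mul 6).sub (hx4.const_mul 6)).div_const p
      have h2 : HasDerivAt (fun x : ℝ => (6 - 12 * x ^ 2) / p ^ 2)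
          ((-(12 * (2 * x))) / p ^ 2) x := by
        have := ((hasDerivAt_const x (6 : ℝ)).sub (hx2.const_mul 12)).div_const (p ^ 2)
        simpa using this
      simpa using (h1.add h2).sub_const (12 / p ^ 3)
    have := he.mul hQ
    refine this.congr_deriv ?_
    field_simp
    ring
  have hcont : IntervalIntegrable
      (fun x => Real.exp (-p * x ^ 2) * (12 * x ^ 3 * (1 - x ^ 2))) volume 0 1 := by
    apply Continuous.intervalIntegrable
    continuity
  have := intervalIntegral.integral_eq_sub_of_hasDerivAt hderiv hcont
  rw [this, hF]
  simp only [ne_eq, OfNat.ofNat_ne_zero, not_false_eq_true, zero_pow, mul_zero, Real.exp_zero]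
  field_simp
  ring
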